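/- In the constrained saddle-point setting, run OpConEx with X := W and the operator F(w) := (∇_u f(u,v), −∇_v f(u,v)) for T ≥ 1 iterations, with step sizes satisfying condition (C). Then: (i) for every w ∈ W̃, G(w̄^T; w) ≤ (1/Γ_T)[(γ₀η₀/2)‖w−w⁰‖² + M_T(0)]; and (ii) ‖[g(w̄^T)]_+‖ ≤ (1/Γ_T)[(γ₀η₀/2)‖w*−w⁰‖² + (γ₀τ₀/2)(‖λ*‖+1)² + M_T(‖λ*‖+1)]. -/

import Mathlib

open scoped InnerProductSpace BigOperators

noncomputable section

/-- ℝ^k with the Euclidean norm. -/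
abbrev Euc (k : ℕ) := EuclideanSpace ℝ (Fin k)

/-- `∇g(x)ᵀ d`, where `G j` is the j-th column of `∇g(x)`. -/
def gradT {m : ℕ} {E : Type*} [NormedAddCommGroup E] [InnerProductSpace ℝ E]
    (G : Fin m → E) (d : E) : Euc m :=
  (EuclideanSpace.equiv (Fin m) ℝ).symm fun j => ⟪G j, d⟫_ℝ

/-- `∇g(x) μ`, where `G j` is the j-th column of `∇g(x)`. -/
def gradMul {m : ℕ} {E : Type*} [NormedAddCommGroup E] [InnerProductSpace ℝ E]
    (G : Fin m → E) (μ : Euc m) : E :=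
  ∑ j, μ j • G j

/-- componentwise positive part `[v]₊`. -/
def posPart {m : ℕ} (v : Euc m) : Euc m :=
  (EuclideanSpace.equiv (Fin m) ℝ).symm fun j => max (v j) 0

/-- The quantity `M_T(a)` of the OpConEx method (over a general inner product space). -/
def opconexMT {m : ℕ} {E : Type*} [NormedAddCommGroup E] [InnerProductSpace ℝ E]
    (γ η τ θ : ℕ → ℝ) (Lg Hg : ℝ)
    (F : E → E) (x xm : ℕ → E) (lam : ℕ → Euc m)
    (ell ellm : ℕ → Euc m) (T : ℕ) (a : ℝ) : ℝ :=
  (∑ t ∈ Finset.range T,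
      (γ t * θ t * ⟪F (x t) - F (xm t), x t - x (t + 1)⟫_ℝ
        + γ t * θ t * ⟪ell t - ellm t, lam (t + 1) - lam t⟫_ℝ
        - γ t * (η t - Lg * a) / 2 * ‖x (t + 1) - x t‖ ^ 2
        - γ t * τ t / 2 * ‖lam t - lam (t + 1)‖ ^ 2
        + a * Hg * γ t * ‖x (t + 1) - x t‖))
    + γ (T - 1) / (2 * η (T - 1)) * ‖F (x T) - F (xm T)‖ ^ 2
    + γ (T - 1) / (2 * τ (T - 1)) * ‖ell T - ellm T‖ ^ 2

lemma einner {m : ℕ} (x y : Euc m) : ⟪x, y⟫_ℝ = ∑ j, x j * y j := by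
  simp [PiLp.inner_apply, RCLike.inner_apply, mul_comm]

lemma gradT_apply' {m : ℕ} {E : Type*} [NormedAddCommGroup E] [InnerProductSpace ℝ E]
    (G : Fin m → E) (d : E) (j : Fin m) : gradT G d j = ⟪G j, d⟫_ℝ := rfl

lemma inner_gradMul' {m : ℕ} {E : Type*} [NormedAddCommGroup E] [InnerProductSpace ℝ E]
    (G : Fin m → E) (μ : Euc m) (d : E) :
    ⟪gradMul G μ, d⟫_ℝ = ⟪gradT G d, μ⟫_ℝ := by
  simp [gradMul, einner, gradT_apply', sum_inner, real_inner_smul_left, mul_comm]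

lemma gradT_sub {m : ℕ} {E : Type*} [NormedAddCommGroup E] [InnerProductSpace ℝ E]
    (G : Fin m → E) (d d' : E) : gradT G (d - d') = gradT G d - gradT G d' := by
  ext j
  simp [gradT_apply', inner_sub_right]

lemma young_ineq {E : Type*} [NormedAddCommGroup E] [InnerProductSpace ℝ E]
    (a b : E) (η : ℝ) (hη : 0 < η) : ⟪a, b⟫_ℝ ≤ η/2*‖b‖^2 + 1/(2*η)*‖a‖^2 := by
  have h1 := real_inner_le_norm a b
  have h2 := sq_nonneg (‖a‖ - η*‖b‖)
  have h5 : η/2*‖b‖^2 + 1/(2*η)*‖a‖^2 - ‖a‖*‖b‖ = (‖a‖ - η*‖b‖)^2 / (2*η) := by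
    field_simp; ring
  nlinarith [div_nonneg h2 (by linarith : (0:ℝ) ≤ 2*η)]

lemma sum_tele_le (e D : ℕ → ℝ) (T : ℕ) (hD : ∀ t, 0 ≤ D t) (he : ∀ t, e (t+1) ≤ e t) :
    ∑ t ∈ Finset.range T, (e t * D t - e t * D (t+1)) ≤ e 0 * D 0 - e (T-1) * D T := by
  have h : ∀ t ∈ Finset.range T, e t * D t - e t * D (t+1)
      ≤ (fun s => e (s-1) * D s) t - (fun s => e (s-1) * D s) (t+1) := by
    intro t _
    cases t with
    | zero => simp
    | succ s =>
      simp only [Nat.add_sub_cancel]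
      have : e (s+1) * D (s+1) ≤ e s * D (s+1) := mul_le_mul_of_nonneg_right (he s) (hD _)
      linarith
  calc ∑ t ∈ Finset.range T, (e t * D t - e t * D (t+1))
      ≤ ∑ t ∈ Finset.range T, ((fun s => e (s-1) * D s) t - (fun s => e (s-1) * D s) (t+1)) :=
        Finset.sum_le_sum h
    _ = e (0-1) * D 0 - e (T-1) * D T := Finset.sum_range_sub' _ T
    _ = e 0 * D 0 - e (T-1) * D T := by norm_num

lemma three_point {E : Type*} [NormedAddCommGroup E] [InnerProductSpace ℝ E]
    (S : Set E) (hS : Convex ℝ S) (p x0 x1 : E) (η : ℝ) (hη : 0 < η)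
    (hx1 : x1 ∈ S)
    (hmin : ∀ y ∈ S, ⟪p, x1⟫_ℝ + η / 2 * ‖x1 - x0‖ ^ 2 ≤ ⟪p, y⟫_ℝ + η / 2 * ‖y - x0‖ ^ 2)
    (y : E) (hy : y ∈ S) :
    ⟪p, x1 - y⟫_ℝ ≤ η / 2 * (‖y - x0‖ ^ 2 - ‖y - x1‖ ^ 2 - ‖x1 - x0‖ ^ 2) := by
  set c := ⟪p, y - x1⟫_ℝ + η * ⟪x1 - x0, y - x1⟫_ℝ with hc
  have key : 0 ≤ c := by
    have hs : ∀ s : ℝ, 0 < s → s ≤ 1 → 0 ≤ c + s * (η/2) * ‖y - x1‖^2 := by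
      intro s hs0 hs1
      have hyS : x1 + s • (y - x1) ∈ S := by
        have h := hS hx1 hy (a := 1 - s) (b := s) (by linarith) hs0.le (by ring)
        have : (1 - s) • x1 + s • y = x1 + s • (y - x1) := by
          simp [smul_sub, sub_smul]; abel
        rwa [this] at h
      have hm := hmin _ hyS
      have hexp : ‖x1 + s • (y - x1) - x0‖^2
          = ‖x1 - x0‖^2 + 2 * (s * ⟪x1 - x0, y - x1⟫_ℝ) + s^2 * ‖y - x1‖^2 := by
        have h1 : x1 + s • (y - x1) - x0 = (x1 - x0) + s • (y - x1) := by abel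
        rw [h1, norm_add_sq_real, real_inner_smul_right, norm_smul]
        simp [mul_pow, abs_of_nonneg hs0.le]
        try ring
      have hip : ⟪p, x1 + s • (y - x1)⟫_ℝ = ⟪p, x1⟫_ℝ + s * ⟪p, y - x1⟫_ℝ := by
        rw [inner_add_right, real_inner_smul_right]
      rw [hip, hexp] at hm
      have h2 : 0 ≤ s * (c + s * (η/2) * ‖y - x1‖^2) := by rw [hc]; nlinarith
      nlinarith
    by_contra hcneg
    push_neg at hcneg
    set Dn := (η/2) * ‖y - x1‖^2 with hD
    have hDn : 0 ≤ Dn := by positivity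
    have hs0 : (0:ℝ) < min 1 ((-c)/(Dn + 1)) := by
      apply lt_min one_pos
      apply div_pos (by linarith) (by linarith)
    have := hs (min 1 ((-c)/(Dn+1))) hs0 (min_le_left _ _)
    have hle : min 1 ((-c)/(Dn+1)) ≤ (-c)/(Dn+1) := min_le_right _ _
    have h3 : min 1 ((-c)/(Dn+1)) * Dn ≤ (-c)/(Dn+1) * Dn := mul_le_mul_of_nonneg_right hle hDn
    have h4 : (-c)/(Dn+1) * Dn < -c := by
      rw [div_mul_eq_mul_div, div_lt_iff₀ (by linarith)]
      nlinarith
    have h5 : min 1 ((-c)/(Dn+1)) * ((η/2) * ‖y-x1‖^2) = min 1 ((-c)/(Dn+1)) * Dn := by rw [hD]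
    nlinarith
  have hid : 2 * ⟪x1 - x0, y - x1⟫_ℝ = ‖y - x0‖^2 - ‖y - x1‖^2 - ‖x1 - x0‖^2 := by
    have h1 : y - x0 = (y - x1) + (x1 - x0) := by abel
    rw [h1, norm_add_sq_real]
    rw [real_inner_comm]
    ring
  have h6 : ⟪p, x1 - y⟫_ℝ = - ⟪p, y - x1⟫_ℝ := by
    rw [← inner_neg_right]; congr 1; abel
  rw [h6]
  nlinarith

lemma avg_inner_zero {G : Type*} [NormedAddCommGroup G] [InnerProductSpace ℝ G]
    (γ : ℕ → ℝ) (T : ℕ) (hΓ : 0 < ∑ t ∈ Finset.range T, γ t) (x : ℕ → G) (v : G) :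
    ∑ t ∈ Finset.range T,
      γ t * ⟪v, x t - (∑ s ∈ Finset.range T, γ s)⁻¹ • ∑ s ∈ Finset.range T, γ s • x s⟫_ℝ = 0 := by
  have hS : ⟪v, ∑ s ∈ Finset.range T, γ s • x s⟫_ℝ = ∑ t ∈ Finset.range T, γ t * ⟪v, x t⟫_ℝ := by
    rw [inner_sum]
    exact Finset.sum_congr rfl fun t _ => real_inner_smul_right v (x t) (γ t)
  simp only [inner_sub_right, real_inner_smul_right, mul_sub]
  rw [Finset.sum_sub_distrib, ← Finset.sum_mul, ← mul_assoc, mul_inv_cancel₀ hΓ.ne', one_mul,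
    hS, sub_self]


noncomputable def fstL (E F : Type*) [NormedAddCommGroup E] [NormedAddCommGroup F]
    [Module ℝ E] [Module ℝ F] : WithLp 2 (E × F) →ₗ[ℝ] E :=
  (LinearMap.fst ℝ E F).comp (WithLp.linearEquiv 2 ℝ (E × F)).toLinearMap

noncomputable def sndL (E F : Type*) [NormedAddCommGroup E] [NormedAddCommGroup F]
    [Module ℝ E] [Module ℝ F] : WithLp 2 (E × F) →ₗ[ℝ] F :=
  (LinearMap.snd ℝ E F).comp (WithLp.linearEquiv 2 ℝ (E × F)).toLinearMap

set_option maxHeartbeats 4000000 in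
/-- **Lemma 6.1 of the paper.** Primal-dual gap and infeasibility bounds for the
OpConEx method applied to convex-concave saddle point problems with coupling
function constraints. -/
theorem opconex_saddle_point_bound
    {nu nv m : ℕ}
    -- product feasible set W = U × V
    (U : Set (Euc nu)) (hUne : U.Nonempty) (hUcomp : IsCompact U) (hUconv : Convex ℝ U)
    (V : Set (Euc nv)) (hVne : V.Nonempty) (hVcomp : IsCompact V) (hVconv : Convex ℝ V)
    (W : Set (WithLp 2 (Euc nu × Euc nv)))
    (hW : W = {w : WithLp 2 (Euc nu × Euc nv) | w.ofLp.1 ∈ U ∧ w.ofLp.2 ∈ V})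
    -- convex-concave objective and its partial gradients
    (f : Euc nu → Euc nv → ℝ) (Fu : Euc nu → Euc nv → Euc nu) (Fv : Euc nu → Euc nv → Euc nv)
    (hfconv : ∀ v ∈ V, ∀ u ∈ U, ∀ u' ∈ U, f u v + ⟪Fu u v, u' - u⟫_ℝ ≤ f u' v)
    (hfconc : ∀ u ∈ U, ∀ v ∈ V, ∀ v' ∈ V, f u v' ≤ f u v + ⟪Fv u v, v' - v⟫_ℝ)
    -- the monotone operator F(w) = (∇_u f(u,v), −∇_v f(u,v))
    (F : WithLp 2 (Euc nu × Euc nv) → WithLp 2 (Euc nu × Euc nv))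
    (hF : ∀ w, F w = (WithLp.equiv 2 (Euc nu × Euc nv)).symm (Fu w.ofLp.1 w.ofLp.2, -Fv w.ofLp.1 w.ofLp.2))
    (L H : ℝ) (hL : 0 ≤ L) (hH : 0 ≤ H)
    (hFmono : ∀ w₁ ∈ W, ∀ w₂ ∈ W, 0 ≤ ⟪F w₁ - F w₂, w₁ - w₂⟫_ℝ)
    (hFlip : ∀ w₁ ∈ W, ∀ w₂ ∈ W, ‖F w₁ - F w₂‖ ≤ L * ‖w₁ - w₂‖ + H)
    -- jointly convex coupling constraints
    (g : WithLp 2 (Euc nu × Euc nv) → Euc m)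
    (Gg : WithLp 2 (Euc nu × Euc nv) → Fin m → WithLp 2 (Euc nu × Euc nv))
    (Mg Lg Hg : ℝ) (hMg : 0 ≤ Mg) (hLg : 0 ≤ Lg) (hHg : 0 ≤ Hg)
    (hgconv : ∀ w ∈ W, ∀ w' ∈ W, ∀ j, g w j + ⟪Gg w j, w' - w⟫_ℝ ≤ g w' j)
    (hglip : ∀ w₁ ∈ W, ∀ w₂ ∈ W, ‖g w₁ - g w₂‖ ≤ Mg * ‖w₁ - w₂‖)
    (hGgbd : ∀ w ∈ W, ∀ μ : Euc m, ‖gradMul (Gg w) μ‖ ≤ Mg * ‖μ‖)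
    (hgsmooth : ∀ w₁ ∈ W, ∀ w₂ ∈ W,
      ‖g w₁ - g w₂ - gradT (Gg w₂) (w₁ - w₂)‖ ≤ Lg / 2 * ‖w₁ - w₂‖ ^ 2 + Hg * ‖w₁ - w₂‖)
    (hWtne : ∃ w ∈ W, ∀ j, g w j ≤ 0)
    -- KKT pair
    (wstar : WithLp 2 (Euc nu × Euc nv)) (lamstar : Euc m)
    (hwstar : wstar ∈ W) (hlamstar : ∀ j, 0 ≤ lamstar j)
    (hsaddle₁ : ∀ w ∈ W,
      ⟪F wstar, wstar⟫_ℝ + ⟪lamstar, g wstar⟫_ℝ ≤ ⟪F wstar, w⟫_ℝ + ⟪lamstar, g w⟫_ℝ)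
    (hsaddle₂ : ∀ lam' : Euc m, (∀ j, 0 ≤ lam' j) →
      ⟪lam', g wstar⟫_ℝ ≤ ⟪lamstar, g wstar⟫_ℝ)
    -- horizon, step sizes and condition (C)
    (T : ℕ) (hT : 1 ≤ T)
    (γ η τ θ : ℕ → ℝ)
    (hγ : ∀ t, 0 < γ t) (hη : ∀ t, 0 < η t) (hτ : ∀ t, 0 < τ t) (hθ : ∀ t, 0 ≤ θ t)
    (hC₁ : ∀ t, γ (t + 1) * η (t + 1) ≤ γ t * η t)
    (hC₂ : ∀ t, γ (t + 1) * τ (t + 1) ≤ γ t * τ t)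
    (hC₃ : ∀ t, γ (t + 1) * θ (t + 1) = γ t)
    -- OpConEx iterates on W
    (w wm : ℕ → WithLp 2 (Euc nu × Euc nv)) (lam : ℕ → Euc m) (ell ellm : ℕ → Euc m)
    (hw0 : w 0 ∈ W) (hwm0 : wm 0 = w 0) (hwm : ∀ t, wm (t + 1) = w t)
    (hlam0 : lam 0 = 0)
    (hell0 : ell 0 = g (w 0))
    (hell : ∀ t, ell (t + 1) = g (w t) + gradT (Gg (w t)) (w (t + 1) - w t))
    (hellm0 : ellm 0 = g (w 0)) (hellm : ∀ t, ellm (t + 1) = ell t)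
    (hlamPos : ∀ t, ∀ j, 0 ≤ lam (t + 1) j)
    (hlamMin : ∀ t, ∀ lam' : Euc m, (∀ j, 0 ≤ lam' j) →
      ⟪-((1 + θ t) • ell t - θ t • ellm t), lam (t + 1)⟫_ℝ
          + τ t / 2 * ‖lam (t + 1) - lam t‖ ^ 2
        ≤ ⟪-((1 + θ t) • ell t - θ t • ellm t), lam'⟫_ℝ
          + τ t / 2 * ‖lam' - lam t‖ ^ 2)
    (hwS : ∀ t, w (t + 1) ∈ W)
    (hwMin : ∀ t, ∀ y ∈ W,
      ⟪(1 + θ t) • F (w t) - θ t • F (wm t) + gradMul (Gg (w t)) (lam (t + 1)),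
          w (t + 1)⟫_ℝ + η t / 2 * ‖w (t + 1) - w t‖ ^ 2
        ≤ ⟪(1 + θ t) • F (w t) - θ t • F (wm t) + gradMul (Gg (w t)) (lam (t + 1)),
          y⟫_ℝ + η t / 2 * ‖y - w t‖ ^ 2) :
    -- (i) gap bound over the feasible set W̃, (ii) infeasibility bound
    (∀ z ∈ W, (∀ j, g z j ≤ 0) →
      f (((∑ t ∈ Finset.range T, γ t)⁻¹ • (∑ t ∈ Finset.range T, γ t • w (t + 1))).ofLp.1) z.ofLp.2
          - f z.ofLp.1 (((∑ t ∈ Finset.range T, γ t)⁻¹ • (∑ t ∈ Finset.range T, γ t • w (t + 1))).ofLp.2)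
        ≤ (∑ t ∈ Finset.range T, γ t)⁻¹ *
            (γ 0 * η 0 / 2 * ‖z - w 0‖ ^ 2
              + opconexMT γ η τ θ Lg Hg F w wm lam ell ellm T 0))
    ∧ ‖posPart (g ((∑ t ∈ Finset.range T, γ t)⁻¹ • (∑ t ∈ Finset.range T, γ t • w (t + 1))))‖
        ≤ (∑ t ∈ Finset.range T, γ t)⁻¹ *
            (γ 0 * η 0 / 2 * ‖wstar - w 0‖ ^ 2 + γ 0 * τ 0 / 2 * (‖lamstar‖ + 1) ^ 2
              + opconexMT γ η τ θ Lg Hg F w wm lam ell ellm T (‖lamstar‖ + 1)) := by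
  have hγ0 : ∀ t, (0:ℝ) ≤ γ t := fun t => (hγ t).le
  have hWconv : Convex ℝ W := by
    rw [hW]
    intro x hx y hy a b ha hb hab
    exact ⟨hUconv hx.1 hy.1 ha hb hab, hVconv hx.2 hy.2 ha hb hab⟩
  have hΛconv : Convex ℝ {μ : Euc m | ∀ j, 0 ≤ μ j} := by
    intro x hx y hy a b ha hb hab j
    have h : (a • x + b • y) j = a * x j + b * y j := rfl
    rw [h]
    exact add_nonneg (mul_nonneg ha (hx j)) (mul_nonneg hb (hy j))
  have hwmem : ∀ t, w t ∈ W := by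
    intro t
    cases t with
    | zero => exact hw0
    | succ s => exact hwS s
  have step : ∀ z ∈ W, ∀ lam' : Euc m, (∀ j, 0 ≤ lam' j) → ∀ t : ℕ,
      γ t * (⟪F (w (t + 1)), w (t + 1) - z⟫_ℝ + ⟪lam', ell (t + 1)⟫_ℝ - ⟪lam (t + 1), g z⟫_ℝ)
      ≤ (γ t * η t / 2 * ‖z - w t‖ ^ 2 - γ t * η t / 2 * ‖z - w (t + 1)‖ ^ 2)
        + (γ t * τ t / 2 * ‖lam' - lam t‖ ^ 2 - γ t * τ t / 2 * ‖lam' - lam (t + 1)‖ ^ 2)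
        + (γ t * ⟪F (w (t + 1)) - F (wm (t + 1)), w (t + 1) - z⟫_ℝ
            - γ (t - 1) * ⟪F (w t) - F (wm t), w t - z⟫_ℝ)
        + (γ t * ⟪ell (t + 1) - ellm (t + 1), lam' - lam (t + 1)⟫_ℝ
            - γ (t - 1) * ⟪ell t - ellm t, lam' - lam t⟫_ℝ)
        + (γ t * θ t * ⟪F (w t) - F (wm t), w t - w (t + 1)⟫_ℝ
            + γ t * θ t * ⟪ell t - ellm t, lam (t + 1) - lam t⟫_ℝ
            - γ t * (η t - Lg * 0) / 2 * ‖w (t + 1) - w t‖ ^ 2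
            - γ t * τ t / 2 * ‖lam t - lam (t + 1)‖ ^ 2
            + 0 * Hg * γ t * ‖w (t + 1) - w t‖) := by
    intro z hz lam' hlam' t
    have hP := three_point W hWconv _ (w t) (w (t+1)) (η t) (hη t) (hwS t) (hwMin t) z hz
    have hDu := three_point {μ : Euc m | ∀ j, 0 ≤ μ j} hΛconv _ (lam t) (lam (t+1)) (τ t) (hτ t)
      (hlamPos t) (fun y hy => hlamMin t y hy) lam' hlam'
    have hR : (0:ℝ) ≤ ⟪g z - g (w t) - gradT (Gg (w t)) (z - w t), lam (t+1)⟫_ℝ := by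
      rw [einner]
      refine Finset.sum_nonneg fun j _ => ?_
      have h1 := hgconv (w t) (hwmem t) z hz j
      have h2 : (g z - g (w t) - gradT (Gg (w t)) (z - w t)) j
          = g z j - g (w t) j - ⟪Gg (w t) j, z - w t⟫_ℝ := rfl
      rw [h2]
      exact mul_nonneg (by linarith) (hlamPos t j)
    have hP2 := mul_le_mul_of_nonneg_left hP (hγ0 t)
    have hDu2 := mul_le_mul_of_nonneg_left hDu (hγ0 t)
    have hR2 := mul_nonneg (hγ0 t) hR
    have hA : γ (t - 1) * ⟪F (w t) - F (wm t), w t - z⟫_ℝ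
        = γ t * θ t * ⟪F (w t) - F (wm t), w t - z⟫_ℝ := by
      cases t with
      | zero => rw [hwm0]; simp
      | succ s => rw [Nat.add_sub_cancel, hC₃ s]
    have hB : γ (t - 1) * ⟪ell t - ellm t, lam' - lam t⟫_ℝ
        = γ t * θ t * ⟪ell t - ellm t, lam' - lam t⟫_ℝ := by
      cases t with
      | zero => rw [hell0, hellm0]; simp
      | succ s => rw [Nat.add_sub_cancel, hC₃ s]
    rw [real_inner_comm (ell (t+1)) lam', real_inner_comm (g z) (lam (t+1)),
      norm_sub_rev (lam t) (lam (t+1)), hwm t, hellm t, hell t]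
    simp only [inner_add_left, inner_add_right, inner_sub_left, inner_sub_right,
      inner_neg_left, inner_neg_right, real_inner_smul_left, real_inner_smul_right,
      gradT_sub, inner_gradMul'] at hP2 hDu2 hR2 hA hB ⊢
    linarith [hP2, hDu2, hR2, hA, hB]
  have key : ∀ z ∈ W, ∀ lam'' : Euc m, (∀ j, 0 ≤ lam'' j) →
      ∑ t ∈ Finset.range T,
          γ t * (⟪F (w (t + 1)), w (t + 1) - z⟫_ℝ + ⟪lam'', ell (t + 1)⟫_ℝ
            - ⟪lam (t + 1), g z⟫_ℝ)
      ≤ γ 0 * η 0 / 2 * ‖z - w 0‖ ^ 2 + γ 0 * τ 0 / 2 * ‖lam''‖ ^ 2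
        + opconexMT γ η τ θ Lg Hg F w wm lam ell ellm T 0 := by
    intro z hz lam'' hlam''
    have h1 := Finset.sum_le_sum (fun t (_ : t ∈ Finset.range T) => step z hz lam'' hlam'' t)
    rw [Finset.sum_add_distrib, Finset.sum_add_distrib, Finset.sum_add_distrib,
      Finset.sum_add_distrib] at h1
    have hη' : ∑ t ∈ Finset.range T,
        (γ t * η t / 2 * ‖z - w t‖ ^ 2 - γ t * η t / 2 * ‖z - w (t + 1)‖ ^ 2)
        ≤ γ 0 * η 0 / 2 * ‖z - w 0‖ ^ 2 - γ (T-1) * η (T-1) / 2 * ‖z - w T‖ ^ 2 :=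
      sum_tele_le (fun t => γ t * η t / 2) (fun t => ‖z - w t‖ ^ 2) T
        (fun t => by positivity) (fun t => by have := hC₁ t; linarith)
    have hτ' : ∑ t ∈ Finset.range T,
        (γ t * τ t / 2 * ‖lam'' - lam t‖ ^ 2 - γ t * τ t / 2 * ‖lam'' - lam (t + 1)‖ ^ 2)
        ≤ γ 0 * τ 0 / 2 * ‖lam'' - lam 0‖ ^ 2 - γ (T-1) * τ (T-1) / 2 * ‖lam'' - lam T‖ ^ 2 :=
      sum_tele_le (fun t => γ t * τ t / 2) (fun t => ‖lam'' - lam t‖ ^ 2) T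
        (fun t => by positivity) (fun t => by have := hC₂ t; linarith)
    rw [hlam0, sub_zero] at hτ'
    have hcF : ∑ t ∈ Finset.range T,
        (γ t * ⟪F (w (t + 1)) - F (wm (t + 1)), w (t + 1) - z⟫_ℝ
          - γ (t - 1) * ⟪F (w t) - F (wm t), w t - z⟫_ℝ)
        = γ (T-1) * ⟪F (w T) - F (wm T), w T - z⟫_ℝ
          - γ (0-1) * ⟪F (w 0) - F (wm 0), w 0 - z⟫_ℝ :=
      Finset.sum_range_sub (fun s => γ (s - 1) * ⟪F (w s) - F (wm s), w s - z⟫_ℝ) T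
    rw [hwm0, sub_self, inner_zero_left, mul_zero, sub_zero] at hcF
    have hcq : ∑ t ∈ Finset.range T,
        (γ t * ⟪ell (t + 1) - ellm (t + 1), lam'' - lam (t + 1)⟫_ℝ
          - γ (t - 1) * ⟪ell t - ellm t, lam'' - lam t⟫_ℝ)
        = γ (T-1) * ⟪ell T - ellm T, lam'' - lam T⟫_ℝ
          - γ (0-1) * ⟪ell 0 - ellm 0, lam'' - lam 0⟫_ℝ :=
      Finset.sum_range_sub (fun s => γ (s - 1) * ⟪ell s - ellm s, lam'' - lam s⟫_ℝ) T
    rw [hell0, hellm0, sub_self, inner_zero_left, mul_zero, sub_zero] at hcq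
    have hY1 : γ (T-1) * ⟪F (w T) - F (wm T), w T - z⟫_ℝ
        ≤ γ (T-1) * η (T-1) / 2 * ‖z - w T‖^2
          + γ (T-1) / (2 * η (T-1)) * ‖F (w T) - F (wm T)‖^2 := by
      have hy := young_ineq (F (w T) - F (wm T)) (w T - z) (η (T-1)) (hη (T-1))
      rw [norm_sub_rev (w T) z] at hy
      have h := mul_le_mul_of_nonneg_left hy (hγ0 (T-1))
      have he : γ (T-1) * (η (T-1)/2 * ‖z - w T‖^2
            + 1/(2*η (T-1)) * ‖F (w T) - F (wm T)‖^2)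
          = γ (T-1) * η (T-1) / 2 * ‖z - w T‖^2
            + γ (T-1) / (2 * η (T-1)) * ‖F (w T) - F (wm T)‖^2 := by ring
      rw [he] at h
      exact h
    have hY2 : γ (T-1) * ⟪ell T - ellm T, lam'' - lam T⟫_ℝ
        ≤ γ (T-1) * τ (T-1) / 2 * ‖lam'' - lam T‖^2
          + γ (T-1) / (2 * τ (T-1)) * ‖ell T - ellm T‖^2 := by
      have h := mul_le_mul_of_nonneg_left (young_ineq (ell T - ellm T) (lam'' - lam T) (τ (T-1)) (hτ (T-1))) (hγ0 (T-1))
      have he : γ (T-1) * (τ (T-1)/2 * ‖lam'' - lam T‖^2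
            + 1/(2*τ (T-1)) * ‖ell T - ellm T‖^2)
          = γ (T-1) * τ (T-1) / 2 * ‖lam'' - lam T‖^2
            + γ (T-1) / (2 * τ (T-1)) * ‖ell T - ellm T‖^2 := by ring
      rw [he] at h
      exact h
    rw [hcF, hcq] at h1
    simp only [opconexMT]
    linarith [h1, hη', hτ', hY1, hY2]
  have key2 : ∀ z ∈ W, ∀ lam'' : Euc m, (∀ j, 0 ≤ lam'' j) → ∀ a : ℝ, ‖lam''‖ ≤ a →
      ∑ t ∈ Finset.range T,
          γ t * (⟪F (w (t + 1)), w (t + 1) - z⟫_ℝ + ⟪lam'', g (w (t + 1))⟫_ℝ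
            - ⟪lam (t + 1), g z⟫_ℝ)
      ≤ γ 0 * η 0 / 2 * ‖z - w 0‖ ^ 2 + γ 0 * τ 0 / 2 * ‖lam''‖ ^ 2
        + opconexMT γ η τ θ Lg Hg F w wm lam ell ellm T a := by
    intro z hz lam'' hlam'' a ha
    have ha0 : (0:ℝ) ≤ a := le_trans (norm_nonneg _) ha
    have hk := key z hz lam'' hlam''
    have hsplit : ∀ t ∈ Finset.range T,
        γ t * (⟪F (w (t + 1)), w (t + 1) - z⟫_ℝ + ⟪lam'', g (w (t + 1))⟫_ℝ
          - ⟪lam (t + 1), g z⟫_ℝ)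
        ≤ γ t * (⟪F (w (t + 1)), w (t + 1) - z⟫_ℝ + ⟪lam'', ell (t + 1)⟫_ℝ
            - ⟪lam (t + 1), g z⟫_ℝ)
          + (γ t * (Lg * a) / 2 * ‖w (t + 1) - w t‖ ^ 2
            + a * Hg * γ t * ‖w (t + 1) - w t‖) := by
      intro t _
      have hv : g (w (t + 1)) - ell (t + 1)
          = g (w (t + 1)) - g (w t) - gradT (Gg (w t)) (w (t + 1) - w t) := by
        rw [hell t]
        abel
      have hsm := hgsmooth (w (t + 1)) (hwS t) (w t) (hwmem t)
      have hb : ⟪lam'', g (w (t + 1)) - ell (t + 1)⟫_ℝ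
          ≤ a * (Lg / 2 * ‖w (t + 1) - w t‖ ^ 2 + Hg * ‖w (t + 1) - w t‖) := by
        calc ⟪lam'', g (w (t + 1)) - ell (t + 1)⟫_ℝ
            ≤ ‖lam''‖ * ‖g (w (t + 1)) - ell (t + 1)‖ := real_inner_le_norm _ _
          _ ≤ a * (Lg / 2 * ‖w (t + 1) - w t‖ ^ 2 + Hg * ‖w (t + 1) - w t‖) := by
              rw [hv]
              exact mul_le_mul ha hsm (norm_nonneg _) ha0
      have hb2 := mul_le_mul_of_nonneg_left hb (hγ0 t)
      have hid : γ t * (⟪F (w (t + 1)), w (t + 1) - z⟫_ℝ + ⟪lam'', g (w (t + 1))⟫_ℝ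
            - ⟪lam (t + 1), g z⟫_ℝ)
          = γ t * (⟪F (w (t + 1)), w (t + 1) - z⟫_ℝ + ⟪lam'', ell (t + 1)⟫_ℝ
              - ⟪lam (t + 1), g z⟫_ℝ)
            + γ t * ⟪lam'', g (w (t + 1)) - ell (t + 1)⟫_ℝ := by
        simp only [inner_sub_right]
        ring
      have he2 : γ t * (a * (Lg / 2 * ‖w (t + 1) - w t‖ ^ 2 + Hg * ‖w (t + 1) - w t‖))
          = γ t * (Lg * a) / 2 * ‖w (t + 1) - w t‖ ^ 2
            + a * Hg * γ t * ‖w (t + 1) - w t‖ := by ring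
      linarith
    have h2 := Finset.sum_le_sum hsplit
    rw [Finset.sum_add_distrib] at h2
    have hM : opconexMT γ η τ θ Lg Hg F w wm lam ell ellm T a
        = opconexMT γ η τ θ Lg Hg F w wm lam ell ellm T 0
          + ∑ t ∈ Finset.range T,
              (γ t * (Lg * a) / 2 * ‖w (t + 1) - w t‖ ^ 2
                + a * Hg * γ t * ‖w (t + 1) - w t‖) := by
      simp only [opconexMT]
      have hc := Finset.sum_congr rfl (fun t (_ : t ∈ Finset.range T) => show
        γ t * θ t * ⟪F (w t) - F (wm t), w t - w (t + 1)⟫_ℝ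
          + γ t * θ t * ⟪ell t - ellm t, lam (t + 1) - lam t⟫_ℝ
          - γ t * (η t - Lg * a) / 2 * ‖w (t + 1) - w t‖ ^ 2
          - γ t * τ t / 2 * ‖lam t - lam (t + 1)‖ ^ 2
          + a * Hg * γ t * ‖w (t + 1) - w t‖
        = (γ t * θ t * ⟪F (w t) - F (wm t), w t - w (t + 1)⟫_ℝ
          + γ t * θ t * ⟪ell t - ellm t, lam (t + 1) - lam t⟫_ℝ
          - γ t * (η t - Lg * 0) / 2 * ‖w (t + 1) - w t‖ ^ 2
          - γ t * τ t / 2 * ‖lam t - lam (t + 1)‖ ^ 2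
          + 0 * Hg * γ t * ‖w (t + 1) - w t‖)
          + (γ t * (Lg * a) / 2 * ‖w (t + 1) - w t‖ ^ 2
            + a * Hg * γ t * ‖w (t + 1) - w t‖)
        from by ring)
      rw [hc, Finset.sum_add_distrib]
      ring
    linarith
  have hΓpos : 0 < ∑ t ∈ Finset.range T, γ t :=
    Finset.sum_pos (fun i _ => hγ i) (Finset.nonempty_range_iff.mpr (by omega))
  constructor
  · -- part (i): gap bound
    intro z hz hgz
    have hzUV : z.ofLp.1 ∈ U ∧ z.ofLp.2 ∈ V := by
      have h := hz
      rw [hW] at h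
      exact h
    set Γs := ∑ t ∈ Finset.range T, γ t with hΓs
    set wbar := Γs⁻¹ • ∑ t ∈ Finset.range T, γ t • w (t + 1) with hwbardef
    have hu1 : wbar.ofLp.1 = Γs⁻¹ • ∑ t ∈ Finset.range T, γ t • (w (t + 1)).ofLp.1 := by
      rw [hwbardef]
      have h : (Γs⁻¹ • ∑ t ∈ Finset.range T, γ t • w (t + 1)).ofLp.1
          = fstL (Euc nu) (Euc nv) (Γs⁻¹ • ∑ t ∈ Finset.range T, γ t • w (t + 1)) := rfl
      rw [h, map_smul, map_sum]
      rfl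
    have hv1 : wbar.ofLp.2 = Γs⁻¹ • ∑ t ∈ Finset.range T, γ t • (w (t + 1)).ofLp.2 := by
      rw [hwbardef]
      have h : (Γs⁻¹ • ∑ t ∈ Finset.range T, γ t • w (t + 1)).ofLp.2
          = sndL (Euc nu) (Euc nv) (Γs⁻¹ • ∑ t ∈ Finset.range T, γ t • w (t + 1)) := rfl
      rw [h, map_smul, map_sum]
      rfl
    have hwU : ∀ t : ℕ, (w (t + 1)).ofLp.1 ∈ U := fun t => by
      have h := hwS t
      rw [hW] at h
      exact h.1
    have hwV : ∀ t : ℕ, (w (t + 1)).ofLp.2 ∈ V := fun t => by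
      have h := hwS t
      rw [hW] at h
      exact h.2
    have hubU : wbar.ofLp.1 ∈ U := by
      rw [hu1]
      have hc := hUconv.centerMass_mem (t := Finset.range T) (w := γ)
        (z := fun t => (w (t + 1)).ofLp.1) (fun i _ => hγ0 i)
        (by rw [← hΓs]; exact hΓpos) (fun i _ => hwU i)
      simpa [Finset.centerMass, ← hΓs] using hc
    have hubV : wbar.ofLp.2 ∈ V := by
      rw [hv1]
      have hc := hVconv.centerMass_mem (t := Finset.range T) (w := γ)
        (z := fun t => (w (t + 1)).ofLp.2) (fun i _ => hγ0 i)
        (by rw [← hΓs]; exact hΓpos) (fun i _ => hwV i)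
      simpa [Finset.centerMass, ← hΓs] using hc
    have havgU : Γs * f wbar.ofLp.1 z.ofLp.2 ≤ ∑ t ∈ Finset.range T, γ t * f (w (t + 1)).ofLp.1 z.ofLp.2 := by
      have h1 : ∀ t ∈ Finset.range T,
          γ t * (f wbar.ofLp.1 z.ofLp.2 + ⟪Fu wbar.ofLp.1 z.ofLp.2, (w (t + 1)).ofLp.1 - wbar.ofLp.1⟫_ℝ)
            ≤ γ t * f (w (t + 1)).ofLp.1 z.ofLp.2 := fun t _ =>
        mul_le_mul_of_nonneg_left (hfconv z.ofLp.2 hzUV.2 wbar.ofLp.1 hubU (w (t + 1)).ofLp.1 (hwU t)) (hγ0 t)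
      have h2 := Finset.sum_le_sum h1
      have h3 := avg_inner_zero γ T (by rw [← hΓs]; exact hΓpos)
        (fun t => (w (t + 1)).ofLp.1) (Fu wbar.ofLp.1 z.ofLp.2)
      rw [← hΓs, ← hu1] at h3
      simp only [mul_add] at h2
      rw [Finset.sum_add_distrib, ← Finset.sum_mul, h3, add_zero, ← hΓs] at h2
      exact h2
    have havgV : ∑ t ∈ Finset.range T, γ t * f z.ofLp.1 (w (t + 1)).ofLp.2 ≤ Γs * f z.ofLp.1 wbar.ofLp.2 := by
      have h1 : ∀ t ∈ Finset.range T,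
          γ t * f z.ofLp.1 (w (t + 1)).ofLp.2
            ≤ γ t * (f z.ofLp.1 wbar.ofLp.2 + ⟪Fv z.ofLp.1 wbar.ofLp.2, (w (t + 1)).ofLp.2 - wbar.ofLp.2⟫_ℝ) := fun t _ =>
        mul_le_mul_of_nonneg_left (hfconc z.ofLp.1 hzUV.1 wbar.ofLp.2 hubV (w (t + 1)).ofLp.2 (hwV t)) (hγ0 t)
      have h2 := Finset.sum_le_sum h1
      have h3 := avg_inner_zero γ T (by rw [← hΓs]; exact hΓpos)
        (fun t => (w (t + 1)).ofLp.2) (Fv z.ofLp.1 wbar.ofLp.2)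
      rw [← hΓs, ← hv1] at h3
      simp only [mul_add] at h2
      rw [Finset.sum_add_distrib, ← Finset.sum_mul, h3, add_zero, ← hΓs] at h2
      exact h2
    have hgap : ∀ t : ℕ, f (w (t + 1)).ofLp.1 z.ofLp.2 - f z.ofLp.1 (w (t + 1)).ofLp.2
        ≤ ⟪F (w (t + 1)), w (t + 1) - z⟫_ℝ := by
      intro t
      have hiF : ⟪F (w (t + 1)), w (t + 1) - z⟫_ℝ
          = ⟪Fu (w (t + 1)).ofLp.1 (w (t + 1)).ofLp.2, (w (t + 1)).ofLp.1 - z.ofLp.1⟫_ℝ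
            + ⟪-Fv (w (t + 1)).ofLp.1 (w (t + 1)).ofLp.2, (w (t + 1)).ofLp.2 - z.ofLp.2⟫_ℝ := by
        rw [hF]
        rfl
      have h1 := hfconv (w (t + 1)).ofLp.2 (hwV t) (w (t + 1)).ofLp.1 (hwU t) z.ofLp.1 hzUV.1
      have h2 := hfconc (w (t + 1)).ofLp.1 (hwU t) (w (t + 1)).ofLp.2 (hwV t) z.ofLp.2 hzUV.2
      rw [hiF]
      simp only [inner_neg_left, inner_sub_right] at h1 h2 ⊢
      linarith
    have hgz2 : ∀ t ∈ Finset.range T, γ t * ⟪F (w (t + 1)), w (t + 1) - z⟫_ℝ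
        ≤ γ t * (⟪F (w (t + 1)), w (t + 1) - z⟫_ℝ - ⟪lam (t + 1), g z⟫_ℝ) := by
      intro t _
      have hle : ⟪lam (t + 1), g z⟫_ℝ ≤ 0 := by
        rw [einner]
        refine Finset.sum_nonpos fun j _ => ?_
        have := mul_le_mul_of_nonneg_left (hgz j) (hlamPos t j)
        simpa using this
      exact mul_le_mul_of_nonneg_left (by linarith) (hγ0 t)
    have hk := key2 z hz 0 (fun j => le_refl 0) 0 (by simp)
    simp only [inner_zero_left, add_zero, norm_zero] at hk
    have hz2 : γ 0 * τ 0 / 2 * (0:ℝ) ^ 2 = 0 := by ring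
    have hfin : Γs * (f wbar.ofLp.1 z.ofLp.2 - f z.ofLp.1 wbar.ofLp.2)
        ≤ γ 0 * η 0 / 2 * ‖z - w 0‖ ^ 2
          + opconexMT γ η τ θ Lg Hg F w wm lam ell ellm T 0 := by
      have hs1 := Finset.sum_le_sum
        (fun t (_ : t ∈ Finset.range T) => mul_le_mul_of_nonneg_left (hgap t) (hγ0 t))
      have hs2 := Finset.sum_le_sum hgz2
      have hsplit2 : ∑ t ∈ Finset.range T,
          γ t * (f (w (t + 1)).ofLp.1 z.ofLp.2 - f z.ofLp.1 (w (t + 1)).ofLp.2)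
          = ∑ t ∈ Finset.range T, γ t * f (w (t + 1)).ofLp.1 z.ofLp.2
            - ∑ t ∈ Finset.range T, γ t * f z.ofLp.1 (w (t + 1)).ofLp.2 := by
        rw [← Finset.sum_sub_distrib]
        exact Finset.sum_congr rfl fun t _ => by ring
      linarith
    have h7 := mul_le_mul_of_nonneg_left hfin (inv_nonneg.mpr hΓpos.le)
    rw [← mul_assoc, inv_mul_cancel₀ hΓpos.ne', one_mul] at h7
    exact h7
  · -- part (ii): infeasibility bound
    set Γs := ∑ t ∈ Finset.range T, γ t with hΓs
    set wbar := Γs⁻¹ • ∑ t ∈ Finset.range T, γ t • w (t + 1) with hwbardef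
    have hu1 : wbar.ofLp.1 = Γs⁻¹ • ∑ t ∈ Finset.range T, γ t • (w (t + 1)).ofLp.1 := by
      rw [hwbardef]
      have h : (Γs⁻¹ • ∑ t ∈ Finset.range T, γ t • w (t + 1)).ofLp.1
          = fstL (Euc nu) (Euc nv) (Γs⁻¹ • ∑ t ∈ Finset.range T, γ t • w (t + 1)) := rfl
      rw [h, map_smul, map_sum]
      rfl
    have hv1 : wbar.ofLp.2 = Γs⁻¹ • ∑ t ∈ Finset.range T, γ t • (w (t + 1)).ofLp.2 := by
      rw [hwbardef]
      have h : (Γs⁻¹ • ∑ t ∈ Finset.range T, γ t • w (t + 1)).ofLp.2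
          = sndL (Euc nu) (Euc nv) (Γs⁻¹ • ∑ t ∈ Finset.range T, γ t • w (t + 1)) := rfl
      rw [h, map_smul, map_sum]
      rfl
    have hwU : ∀ t : ℕ, (w (t + 1)).ofLp.1 ∈ U := fun t => by
      have h := hwS t
      rw [hW] at h
      exact h.1
    have hwV : ∀ t : ℕ, (w (t + 1)).ofLp.2 ∈ V := fun t => by
      have h := hwS t
      rw [hW] at h
      exact h.2
    have hubU : wbar.ofLp.1 ∈ U := by
      rw [hu1]
      have hc := hUconv.centerMass_mem (t := Finset.range T) (w := γ)
        (z := fun t => (w (t + 1)).ofLp.1) (fun i _ => hγ0 i)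
        (by rw [← hΓs]; exact hΓpos) (fun i _ => hwU i)
      simpa [Finset.centerMass, ← hΓs] using hc
    have hubV : wbar.ofLp.2 ∈ V := by
      rw [hv1]
      have hc := hVconv.centerMass_mem (t := Finset.range T) (w := γ)
        (z := fun t => (w (t + 1)).ofLp.2) (fun i _ => hγ0 i)
        (by rw [← hΓs]; exact hΓpos) (fun i _ => hwV i)
      simpa [Finset.centerMass, ← hΓs] using hc
    have hwbarW : wbar ∈ W := by
      rw [hW]
      exact ⟨hubU, hubV⟩
    have hbracket : ∀ t : ℕ, 0 ≤ ⟪F (w (t + 1)), w (t + 1) - wstar⟫_ℝ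
        + ⟪lamstar, g (w (t + 1))⟫_ℝ - ⟪lam (t + 1), g wstar⟫_ℝ := by
      intro t
      have h1 := hFmono (w (t + 1)) (hwS t) wstar hwstar
      have h2 := hsaddle₁ (w (t + 1)) (hwS t)
      have h3 := hsaddle₂ (lam (t + 1)) (hlamPos t)
      simp only [inner_sub_left, inner_sub_right] at h1 ⊢
      linarith
    set p := posPart (g wbar) with hpdef
    have hppos : ∀ j, 0 ≤ p j := fun j => le_max_right _ _
    have hgavg : ∀ j, Γs * g wbar j ≤ ∑ t ∈ Finset.range T, γ t * g (w (t + 1)) j := by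
      intro j
      have h1 : ∀ t ∈ Finset.range T,
          γ t * (g wbar j + ⟪Gg wbar j, w (t + 1) - wbar⟫_ℝ) ≤ γ t * g (w (t + 1)) j :=
        fun t _ => mul_le_mul_of_nonneg_left (hgconv wbar hwbarW (w (t + 1)) (hwS t) j) (hγ0 t)
      have h2 := Finset.sum_le_sum h1
      have h3 := avg_inner_zero γ T (by rw [← hΓs]; exact hΓpos)
        (fun t => w (t + 1)) (Gg wbar j)
      rw [← hΓs, ← hwbardef] at h3
      simp only [mul_add] at h2
      rw [Finset.sum_add_distrib, ← Finset.sum_mul, h3, add_zero, ← hΓs] at h2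
      exact h2
    have hsuff : Γs * ‖p‖ ≤ γ 0 * η 0 / 2 * ‖wstar - w 0‖ ^ 2
        + γ 0 * τ 0 / 2 * (‖lamstar‖ + 1) ^ 2
        + opconexMT γ η τ θ Lg Hg F w wm lam ell ellm T (‖lamstar‖ + 1) := by
      have hgτ : (0:ℝ) ≤ γ 0 * τ 0 / 2 := by
        have := mul_nonneg (hγ0 0) (hτ 0).le
        linarith
      by_cases hp0 : p = 0
      · rw [hp0, norm_zero, mul_zero]
        have hk := key2 wstar hwstar lamstar hlamstar (‖lamstar‖ + 1) (by linarith)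
        have hnn : 0 ≤ ∑ t ∈ Finset.range T,
            γ t * (⟪F (w (t + 1)), w (t + 1) - wstar⟫_ℝ
              + ⟪lamstar, g (w (t + 1))⟫_ℝ - ⟪lam (t + 1), g wstar⟫_ℝ) :=
          Finset.sum_nonneg fun t _ => mul_nonneg (hγ0 t) (hbracket t)
        have h1 : ‖lamstar‖ ^ 2 ≤ (‖lamstar‖ + 1) ^ 2 := by
          nlinarith [norm_nonneg lamstar]
        have hsq := mul_le_mul_of_nonneg_left h1 hgτ
        linarith
      · set ρ := ‖p‖⁻¹ • p with hρdef
        have hpn : (0:ℝ) < ‖p‖ := norm_pos_iff.mpr hp0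
        have hρpos : ∀ j, 0 ≤ ρ j := fun j =>
          mul_nonneg (inv_nonneg.mpr hpn.le) (hppos j)
        have hρn : ‖ρ‖ = 1 := by
          rw [hρdef, norm_smul, norm_inv, norm_norm, inv_mul_cancel₀ hpn.ne']
        set lamh := lamstar + ρ with hlamhdef
        have hlamhpos : ∀ j, 0 ≤ lamh j := fun j => add_nonneg (hlamstar j) (hρpos j)
        have hlamhn : ‖lamh‖ ≤ ‖lamstar‖ + 1 := by
          rw [hlamhdef]
          calc ‖lamstar + ρ‖ ≤ ‖lamstar‖ + ‖ρ‖ := norm_add_le _ _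
            _ = ‖lamstar‖ + 1 := by rw [hρn]
        have hk := key2 wstar hwstar lamh hlamhpos (‖lamstar‖ + 1) hlamhn
        have hlow : ∀ t ∈ Finset.range T, γ t * ⟪ρ, g (w (t + 1))⟫_ℝ
            ≤ γ t * (⟪F (w (t + 1)), w (t + 1) - wstar⟫_ℝ + ⟪lamh, g (w (t + 1))⟫_ℝ
              - ⟪lam (t + 1), g wstar⟫_ℝ) := by
          intro t _
          refine mul_le_mul_of_nonneg_left ?_ (hγ0 t)
          have hb := hbracket t
          have hadd : ⟪lamh, g (w (t + 1))⟫_ℝ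
              = ⟪lamstar, g (w (t + 1))⟫_ℝ + ⟪ρ, g (w (t + 1))⟫_ℝ := by
            rw [hlamhdef, inner_add_left]
          linarith
        have hjensen : Γs * ⟪ρ, g wbar⟫_ℝ
            ≤ ∑ t ∈ Finset.range T, γ t * ⟪ρ, g (w (t + 1))⟫_ℝ := by
          have lhs1 : Γs * ⟪ρ, g wbar⟫_ℝ = ∑ j, ρ j * (Γs * g wbar j) := by
            rw [einner, Finset.mul_sum]
            exact Finset.sum_congr rfl fun j _ => by ring
          have rhs1 : ∑ t ∈ Finset.range T, γ t * ⟪ρ, g (w (t + 1))⟫_ℝ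
              = ∑ j, ρ j * (∑ t ∈ Finset.range T, γ t * g (w (t + 1)) j) := by
            calc ∑ t ∈ Finset.range T, γ t * ⟪ρ, g (w (t + 1))⟫_ℝ
                = ∑ t ∈ Finset.range T, ∑ j, γ t * (ρ j * g (w (t + 1)) j) := by
                  refine Finset.sum_congr rfl fun t _ => ?_
                  rw [einner, Finset.mul_sum]
              _ = ∑ j, ∑ t ∈ Finset.range T, γ t * (ρ j * g (w (t + 1)) j) :=
                  Finset.sum_comm
              _ = ∑ j, ρ j * (∑ t ∈ Finset.range T, γ t * g (w (t + 1)) j) := by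
                  refine Finset.sum_congr rfl fun j _ => ?_
                  rw [Finset.mul_sum]
                  exact Finset.sum_congr rfl fun t _ => by ring
          rw [lhs1, rhs1]
          exact Finset.sum_le_sum fun j _ =>
            mul_le_mul_of_nonneg_left (hgavg j) (hρpos j)
        have hpval : ⟪ρ, g wbar⟫_ℝ = ‖p‖ := by
          have h1 : ⟪p, g wbar⟫_ℝ = ‖p‖ ^ 2 := by
            rw [einner, ← real_inner_self_eq_norm_sq, einner]
            refine Finset.sum_congr rfl fun j _ => ?_
            have hpj : p j = max (g wbar j) 0 := rfl
            rcases le_or_gt (g wbar j) 0 with h | h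
            · rw [hpj, max_eq_right h]
              ring
            · rw [hpj, max_eq_left h.le]
          rw [hρdef, real_inner_smul_left, h1, sq, ← mul_assoc,
            inv_mul_cancel₀ hpn.ne', one_mul]
        have hchain : Γs * ‖p‖
            ≤ γ 0 * η 0 / 2 * ‖wstar - w 0‖ ^ 2 + γ 0 * τ 0 / 2 * ‖lamh‖ ^ 2
              + opconexMT γ η τ θ Lg Hg F w wm lam ell ellm T (‖lamstar‖ + 1) := by
          calc Γs * ‖p‖ = Γs * ⟪ρ, g wbar⟫_ℝ := by rw [hpval]
            _ ≤ ∑ t ∈ Finset.range T, γ t * ⟪ρ, g (w (t + 1))⟫_ℝ := hjensen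
            _ ≤ ∑ t ∈ Finset.range T,
                γ t * (⟪F (w (t + 1)), w (t + 1) - wstar⟫_ℝ + ⟪lamh, g (w (t + 1))⟫_ℝ
                  - ⟪lam (t + 1), g wstar⟫_ℝ) := Finset.sum_le_sum hlow
            _ ≤ _ := hk
        have h1 : ‖lamh‖ ^ 2 ≤ (‖lamstar‖ + 1) ^ 2 :=
          pow_le_pow_left₀ (norm_nonneg lamh) hlamhn 2
        have hsq := mul_le_mul_of_nonneg_left h1 hgτ
        linarith
    have h7 := mul_le_mul_of_nonneg_left hsuff (inv_nonneg.mpr hΓpos.le)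
    rw [← mul_assoc, inv_mul_cancel₀ hΓpos.ne', one_mul] at h7
    exact h7

end
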